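/- arXiv:2009.05031 — 6 statements merged into one kernel-verified Lean document; each statement's English description precedes it below -/
import Mathlib

section
/- Let ω ∈ ℝ and let r, S : I → ℝ be differentiable functions on an interval I ⊆ ℝ satisfying r'·S + r·(1 + ω²r²)·S' = 0 on I. Then the function s ↦ ω·r(s)·S(s)/√(1 + ω²r(s)²) is constant on I. -/
/-- The conservation law: if `r'·S + r·(1 + ω²r²)·S' = 0` on an interval `I`,
then `s ↦ ω·r(s)·S(s)/√(1 + ω²r(s)²)` is constant on `I`. -/
theorem stmt_1 (ω : ℝ) (I : Set ℝ) (hI : Convex ℝ I)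
    (r S r' S' : ℝ → ℝ)
    (hr : ∀ s ∈ I, HasDerivAt r (r' s) s)
    (hS : ∀ s ∈ I, HasDerivAt S (S' s) s)
    (hode : ∀ s ∈ I, r' s * S s + r s * (1 + ω ^ 2 * r s ^ 2) * S' s = 0) :
    ∀ s ∈ I, ∀ t ∈ I,
      ω * r s * S s / Real.sqrt (1 + ω ^ 2 * r s ^ 2)
        = ω * r t * S t / Real.sqrt (1 + ω ^ 2 * r t ^ 2) := by
  set f : ℝ → ℝ := fun s => ω * r s * S s / Real.sqrt (1 + ω ^ 2 * r s ^ 2) with hf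
  have key : ∀ x ∈ I, HasDerivWithinAt f 0 I x := by
    intro x hx
    have hqpos : 0 < 1 + ω ^ 2 * r x ^ 2 := by positivity
    have hq : HasDerivAt (fun s => 1 + ω ^ 2 * r s ^ 2)
        (ω ^ 2 * (2 * r x * r' x)) x := by
      simpa using (((hr x hx).pow 2).const_mul (ω ^ 2)).const_add 1
    have hsq : HasDerivAt (fun s => Real.sqrt (1 + ω ^ 2 * r s ^ 2))
        (ω ^ 2 * (2 * r x * r' x) / (2 * Real.sqrt (1 + ω ^ 2 * r x ^ 2))) x :=
      hq.sqrt hqpos.ne'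
    have hN : HasDerivAt (fun s => ω * r s * S s)
        (ω * r' x * S x + ω * r x * S' x) x := by
      simpa [mul_assoc] using ((hr x hx).const_mul ω).fun_mul (hS x hx)
    have hupos : 0 < Real.sqrt (1 + ω ^ 2 * r x ^ 2) := Real.sqrt_pos.mpr hqpos
    have hdiv := hN.fun_div hsq hupos.ne'
    have hu2 : Real.sqrt (1 + ω ^ 2 * r x ^ 2) ^ 2 = 1 + ω ^ 2 * r x ^ 2 :=
      Real.sq_sqrt hqpos.le
    have hode' := hode x hx
    have hzero : ((ω * r' x * S x + ω * r x * S' x) * Real.sqrt (1 + ω ^ 2 * r x ^ 2)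
        - ω * r x * S x * (ω ^ 2 * (2 * r x * r' x) / (2 * Real.sqrt (1 + ω ^ 2 * r x ^ 2))))
        / Real.sqrt (1 + ω ^ 2 * r x ^ 2) ^ 2 = 0 := by
      rw [div_eq_zero_iff]
      left
      field_simp
      linear_combination (ω * r' x * S x + ω * r x * S' x) * hu2 + ω * hode'
    have : HasDerivAt f 0 x := by
      rw [hf]
      rw [← hzero]
      exact hdiv
    exact this.hasDerivWithinAt
  intro s hs t ht
  have := hI.norm_image_sub_le_of_norm_hasDerivWithin_le (C := 0) key
    (fun x _ => by simp) ht hs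
  simp only [zero_mul, norm_le_zero_iff, sub_eq_zero] at this
  exact this
end

section
/- Let γ₀ ≠ 0 and ω ≠ 0 be real numbers, set β := 1/(1 + γ₀²) and γ² := (1 + γ₀²)/γ₀², and define r : ℝ → ℝ by r(s) := √(γ₀² + β ω² s²)/|ω|. Then r is differentiable and satisfies the shape equation ω² r(s)² · (γ² (1 − r'(s)²) − 1) = 1 for all s ∈ ℝ. -/
/-- The explicit radius `r(s) = √(γ₀² + βω²s²)/|ω|`, `β = 1/(1+γ₀²)`, is
differentiable and satisfies the shape equation
`ω²r²(γ²(1 − r'²) − 1) = 1` with `γ² = (1+γ₀²)/γ₀²`. -/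
theorem stmt_2 (γ₀ ω : ℝ) (hγ₀ : γ₀ ≠ 0) (hω : ω ≠ 0)
    (β : ℝ) (hβ : β = 1 / (1 + γ₀ ^ 2))
    (r : ℝ → ℝ)
    (hr : r = fun s => Real.sqrt (γ₀ ^ 2 + β * ω ^ 2 * s ^ 2) / |ω|) :
    Differentiable ℝ r ∧
      ∀ s : ℝ,
        ω ^ 2 * r s ^ 2 * ((1 + γ₀ ^ 2) / γ₀ ^ 2 * (1 - deriv r s ^ 2) - 1) = 1 := by
  have h1γ : (0:ℝ) < 1 + γ₀ ^ 2 := by positivity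
  have hβpos : 0 < β := by rw [hβ]; positivity
  have hu : ∀ s : ℝ, 0 < γ₀ ^ 2 + β * ω ^ 2 * s ^ 2 := by
    intro s
    have : 0 < γ₀ ^ 2 := by positivity
    nlinarith [mul_nonneg (mul_nonneg hβpos.le (sq_nonneg ω)) (sq_nonneg s)]
  have key : ∀ s : ℝ, HasDerivAt r
      (β * ω ^ 2 * s / Real.sqrt (γ₀ ^ 2 + β * ω ^ 2 * s ^ 2) / |ω|) s := by
    intro s
    have h1 : HasDerivAt (fun s : ℝ => γ₀ ^ 2 + β * ω ^ 2 * s ^ 2)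
        (β * ω ^ 2 * (2 * s)) s := by
      have := ((hasDerivAt_pow 2 s).const_mul (β * ω ^ 2)).const_add (γ₀ ^ 2)
      refine this.congr_deriv ?_
      ring
    have h2 := (h1.sqrt (hu s).ne').div_const |ω|
    rw [hr]
    refine h2.congr_deriv ?_
    have hs : Real.sqrt (γ₀ ^ 2 + β * ω ^ 2 * s ^ 2) ≠ 0 :=
      (Real.sqrt_pos.mpr (hu s)).ne'
    field_simp
  refine ⟨fun s => (key s).differentiableAt, fun s => ?_⟩
  have hd := (key s).deriv
  rw [hd, hr]
  have hsq : Real.sqrt (γ₀ ^ 2 + β * ω ^ 2 * s ^ 2) ^ 2 = γ₀ ^ 2 + β * ω ^ 2 * s ^ 2 :=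
    Real.sq_sqrt (hu s).le
  have hs : Real.sqrt (γ₀ ^ 2 + β * ω ^ 2 * s ^ 2) ≠ 0 :=
    (Real.sqrt_pos.mpr (hu s)).ne'
  have habs : |ω| ≠ 0 := abs_ne_zero.mpr hω
  have habs2 : |ω| ^ 2 = ω ^ 2 := sq_abs ω
  have hβ' : β * (1 + γ₀ ^ 2) = 1 := by rw [hβ]; field_simp
  have e1 : (β * ω ^ 2 * s / Real.sqrt (γ₀ ^ 2 + β * ω ^ 2 * s ^ 2) / |ω|) ^ 2
      = β ^ 2 * ω ^ 2 * s ^ 2 / (γ₀ ^ 2 + β * ω ^ 2 * s ^ 2) := by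
    rw [div_pow, div_pow, hsq, habs2, mul_pow, mul_pow]
    field_simp
  have e2 : (Real.sqrt (γ₀ ^ 2 + β * ω ^ 2 * s ^ 2) / |ω|) ^ 2
      = (γ₀ ^ 2 + β * ω ^ 2 * s ^ 2) / ω ^ 2 := by
    rw [div_pow, hsq, habs2]
  simp only [e1, e2]
  have hune : (γ₀ ^ 2 + β * ω ^ 2 * s ^ 2) ≠ 0 := (hu s).ne'
  have hγ2 : γ₀ ^ 2 ≠ 0 := pow_ne_zero 2 hγ₀
  have hω2 : ω ^ 2 ≠ 0 := pow_ne_zero 2 hω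
  field_simp
  linear_combination (-(ω ^ 2 * β * s ^ 2)) * hβ'
end

section
/- Let γ, ω be real numbers with γ ≠ 0 and ω ≠ 0, let I be an interval containing 0, and let r : I → ℝ be a twice differentiable positive function satisfying γ²(1 − r'(s)²) = 1/(ω²r(s)²) + 1 on I, with r'(0) = 0 and r'(s) ≠ 0 for all s ∈ I \ {0}. Then r(s)·r'(s) = β·s and r(s)² = r(0)² + β s² for all s ∈ I, where β := 1 − 1/γ². -/
open Set Filter Topology


/-- Integrating the shape equation `γ²(1 − r'²) = 1/(ω²r²) + 1` with
`r'(0) = 0` and `r' ≠ 0` away from `0` gives `r·r' = β·s` and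
`r² = r(0)² + βs²`, where `β = 1 − 1/γ²`. -/
theorem stmt_4 (γ ω : ℝ) (hγ : γ ≠ 0) (hω : ω ≠ 0)
    (I : Set ℝ) (hI : Convex ℝ I) (h0 : (0 : ℝ) ∈ I)
    (r r' r'' : ℝ → ℝ)
    (hrpos : ∀ s ∈ I, 0 < r s)
    (hd1 : ∀ s ∈ I, HasDerivAt r (r' s) s)
    (hd2 : ∀ s ∈ I, HasDerivAt r' (r'' s) s)
    (hshape : ∀ s ∈ I, γ ^ 2 * (1 - r' s ^ 2) = 1 / (ω ^ 2 * r s ^ 2) + 1)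
    (hr'0 : r' 0 = 0)
    (hr'ne : ∀ s ∈ I \ {(0 : ℝ)}, r' s ≠ 0) :
    ∀ s ∈ I,
      r s * r' s = (1 - 1 / γ ^ 2) * s ∧
      r s ^ 2 = r 0 ^ 2 + (1 - 1 / γ ^ 2) * s ^ 2 := by
  set β : ℝ := 1 - 1 / γ ^ 2 with hβ
  have hIord := hI.ordConnected
  by_cases htriv : ∀ t ∈ I, t = 0
  · intro s hs
    have hs0 := htriv s hs
    subst hs0
    constructor
    · simp [hr'0]
    · ring
  push_neg at htriv
  obtain ⟨t, htI, ht0⟩ := htriv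
  have hUD : UniqueDiffOn ℝ I := by
    apply uniqueDiffOn_convex hI
    rcases lt_or_gt_of_ne ht0 with h | h
    · exact ⟨t / 2, (isOpen_Ioo.subset_interior_iff.2 fun x hx =>
        hIord.out htI h0 ⟨hx.1.le, hx.2.le⟩) ⟨by linarith, by linarith⟩⟩
    · exact ⟨t / 2, (isOpen_Ioo.subset_interior_iff.2 fun x hx =>
        hIord.out h0 htI ⟨hx.1.le, hx.2.le⟩) ⟨by linarith, by linarith⟩⟩
  -- lemma A: pointwise value of r'^2
  have hA : ∀ s ∈ I, r' s ^ 2 = β - 1 / (γ ^ 2 * ω ^ 2 * r s ^ 2) := by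
    intro s hs
    have h := hshape s hs
    have hr := (hrpos s hs).ne'
    rw [hβ]
    field_simp at h ⊢
    first
    | linear_combination h
    | linear_combination -h
    | nlinarith [h]
  -- second derivative formula away from 0
  have hB : ∀ s ∈ I, s ≠ 0 → r s * r'' s = 1 / (γ ^ 2 * ω ^ 2 * r s ^ 2) := by
    intro s hs hs0
    have hr := hrpos s hs
    have hq : (ω ^ 2 * r s ^ 2) ≠ 0 := by positivity
    -- derivative of the shape function, two ways
    have hzero : HasDerivWithinAt
        (fun x => γ ^ 2 * (1 - r' x ^ 2) - ((ω ^ 2 * r x ^ 2)⁻¹ + 1)) 0 I s := by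
      have hc : HasDerivWithinAt (fun _ : ℝ => (0 : ℝ)) 0 I s := (hasDerivAt_const s 0).hasDerivWithinAt
      apply hc.congr
      · intro y hy
        have := hshape y hy
        rw [one_div] at this
        linarith
      · have := hshape s hs
        rw [one_div] at this
        linarith
    have hcomp : HasDerivAt
        (fun x => γ ^ 2 * (1 - r' x ^ 2) - ((ω ^ 2 * r x ^ 2)⁻¹ + 1))
        (γ ^ 2 * (0 - (2 : ℕ) * r' s ^ 1 * r'' s) -
          (-(ω ^ 2 * ((2 : ℕ) * r s ^ 1 * r' s)) / (ω ^ 2 * r s ^ 2) ^ 2)) s := by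
      have h2 : HasDerivAt (fun x => r' x ^ 2) ((2 : ℕ) * r' s ^ 1 * r'' s) s := (hd2 s hs).pow 2
      have hA' : HasDerivAt (fun x => γ ^ 2 * (1 - r' x ^ 2))
          (γ ^ 2 * (0 - (2 : ℕ) * r' s ^ 1 * r'' s)) s :=
        ((hasDerivAt_const s (1 : ℝ)).sub h2).const_mul _
      have hq' : HasDerivAt (fun x => ω ^ 2 * r x ^ 2) (ω ^ 2 * ((2 : ℕ) * r s ^ 1 * r' s)) s :=
        ((hd1 s hs).pow 2).const_mul _
      have hinv := hq'.inv hq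
      exact hA'.sub (hinv.add_const 1)
    have huniq : γ ^ 2 * (0 - (2 : ℕ) * r' s ^ 1 * r'' s) -
        (-(ω ^ 2 * ((2 : ℕ) * r s ^ 1 * r' s)) / (ω ^ 2 * r s ^ 2) ^ 2) = 0 := by
      have e1 := (hcomp.hasDerivWithinAt (s := I)).derivWithin (hUD s hs)
      have e2 := hzero.derivWithin (hUD s hs)
      rw [e1] at e2
      exact e2
    have hr'ne' : r' s ≠ 0 := hr'ne s ⟨hs, hs0⟩
    have hrne := hr.ne'
    field_simp at huniq ⊢
    have h2' : (2 : ℝ) * r' s * ω ^ 2 ≠ 0 := by positivity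
    have h3 : γ ^ 2 * r'' s * ω ^ 2 * r s ^ 4 = r s := by
      apply mul_left_cancel₀ h2'
      first
      | linear_combination -huniq
      | linear_combination (-(ω ^ 2 * r s)) * huniq
    have h5 : r s ^ 2 * (r s * r'' s * (γ ^ 2 * ω ^ 2 * r s ^ 2)) = r s ^ 2 * 1 := by
      linear_combination r s * h3
    exact mul_left_cancel₀ (pow_ne_zero 2 hrne) (by linear_combination h5)
  -- derivative of g = r r' - β s
  have hgd : ∀ s ∈ I,
      HasDerivAt (fun x => r x * r' x - β * x) (r' s * r' s + r s * r'' s - β * 1) s := by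
    intro s hs
    exact ((hd1 s hs).mul (hd2 s hs)).sub ((hasDerivAt_id s).const_mul β)
  have hgd0 : ∀ s ∈ I, s ≠ 0 → HasDerivAt (fun x => r x * r' x - β * x) 0 s := by
    intro s hs hs0
    have h1 := hA s hs
    have h2 := hB s hs hs0
    have := hgd s hs
    have hv : r' s * r' s + r s * r'' s - β * 1 = 0 := by
      have : r' s * r' s = r' s ^ 2 := by ring
      rw [this, h1, h2]; ring
    rwa [hv] at this
  have hg0 : (fun x => r x * r' x - β * x) 0 = 0 := by simp [hr'0]
  have key : ∀ s ∈ I, r s * r' s = β * s := by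
    intro s hs
    rcases lt_trichotomy s 0 with hneg | hzero | hpos
    · -- s < 0
      have hconst : ∀ a ∈ Ico s (0 : ℝ), (fun x => r x * r' x - β * x) a = (fun x => r x * r' x - β * x) s := by
        intro a ha
        have hsub2 : Icc s a ⊆ I := fun x hx => hIord.out hs h0 ⟨hx.1, hx.2.trans ha.2.le⟩
        have hcont : ContinuousOn (fun x => r x * r' x - β * x) (Icc s a) :=
          fun x hx => ((hgd x (hsub2 hx)).continuousAt).continuousWithinAt
        have hder : ∀ x ∈ Ico s a, HasDerivWithinAt (fun x => r x * r' x - β * x) 0 (Ici x) x := by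
          intro x hx
          exact (hgd0 x (hsub2 ⟨hx.1, hx.2.le⟩) (by exact ne_of_lt (hx.2.trans_le ha.2.le))).hasDerivWithinAt
        exact constant_of_has_deriv_right_zero hcont hder a ⟨ha.1, le_refl a⟩
      have h1 : Tendsto (fun x => r x * r' x - β * x) (𝓝[<] (0 : ℝ)) (𝓝 ((fun x => r x * r' x - β * x) 0)) :=
        ((hgd 0 h0).continuousAt.tendsto).mono_left nhdsWithin_le_nhds
      have h2 : Tendsto (fun x => r x * r' x - β * x) (𝓝[<] (0 : ℝ)) (𝓝 ((fun x => r x * r' x - β * x) s)) := by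
        apply Tendsto.congr' _ (tendsto_const_nhds)
        filter_upwards [Ico_mem_nhdsLT_of_mem (Set.mem_Ioc.2 ⟨hneg, le_refl (0:ℝ)⟩)] with a ha
        exact (hconst a ha).symm
      have := tendsto_nhds_unique h1 h2
      rw [hg0] at this
      have : r s * r' s - β * s = 0 := this.symm
      linarith
    · subst hzero; rw [hr'0]; ring
    · -- s > 0
      have hconst : ∀ a ∈ Ioc (0 : ℝ) s, (fun x => r x * r' x - β * x) s = (fun x => r x * r' x - β * x) a := by
        intro a ha
        have hsub2 : Icc a s ⊆ I := fun x hx => hIord.out h0 hs ⟨ha.1.le.trans hx.1, hx.2⟩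
        have hcont : ContinuousOn (fun x => r x * r' x - β * x) (Icc a s) :=
          fun x hx => ((hgd x (hsub2 hx)).continuousAt).continuousWithinAt
        have hder : ∀ x ∈ Ico a s, HasDerivWithinAt (fun x => r x * r' x - β * x) 0 (Ici x) x := by
          intro x hx
          exact (hgd0 x (hsub2 ⟨hx.1, hx.2.le⟩) (ne_of_gt (ha.1.trans_le hx.1))).hasDerivWithinAt
        exact constant_of_has_deriv_right_zero hcont hder s ⟨ha.2, le_refl s⟩
      have h1 : Tendsto (fun x => r x * r' x - β * x) (𝓝[>] (0 : ℝ)) (𝓝 ((fun x => r x * r' x - β * x) 0)) :=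
        ((hgd 0 h0).continuousAt.tendsto).mono_left nhdsWithin_le_nhds
      have h2 : Tendsto (fun x => r x * r' x - β * x) (𝓝[>] (0 : ℝ)) (𝓝 ((fun x => r x * r' x - β * x) s)) := by
        apply Tendsto.congr' _ (tendsto_const_nhds)
        filter_upwards [Ioc_mem_nhdsGT_of_mem (Set.mem_Ico.2 ⟨le_refl (0:ℝ), hpos⟩)] with a ha
        exact hconst a ha
      have := tendsto_nhds_unique h1 h2
      rw [hg0] at this
      have : r s * r' s - β * s = 0 := this.symm
      linarith
  -- second part
  have hhd0 : ∀ x ∈ I, HasDerivAt (fun y => r y ^ 2 - β * y ^ 2) 0 x := by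
    intro x hx
    have h1 : HasDerivAt (fun y => r y ^ 2 - β * y ^ 2)
        ((2 : ℕ) * r x ^ 1 * r' x - β * ((2 : ℕ) * x ^ 1)) x :=
      ((hd1 x hx).pow 2).sub ((hasDerivAt_pow 2 x).const_mul β)
    have hv : ((2 : ℕ) : ℝ) * r x ^ 1 * r' x - β * ((2 : ℕ) * x ^ 1) = 0 := by
      have := key x hx
      push_cast
      nlinarith [key x hx]
    rwa [hv] at h1
  intro s hs
  refine ⟨key s hs, ?_⟩
  rcases lt_trichotomy s 0 with hneg | hzero | hpos
  · have hsub : Icc s (0 : ℝ) ⊆ I := hIord.out hs h0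
    have hcont : ContinuousOn (fun y => r y ^ 2 - β * y ^ 2) (Icc s 0) :=
      fun x hx => ((hhd0 x (hsub hx)).continuousAt).continuousWithinAt
    have hder : ∀ x ∈ Ico s (0 : ℝ), HasDerivWithinAt (fun y => r y ^ 2 - β * y ^ 2) 0 (Ici x) x :=
      fun x hx => (hhd0 x (hsub ⟨hx.1, hx.2.le⟩)).hasDerivWithinAt
    have := constant_of_has_deriv_right_zero hcont hder 0 ⟨hneg.le, le_refl (0:ℝ)⟩
    nlinarith [this]
  · subst hzero; ring
  · have hsub : Icc (0 : ℝ) s ⊆ I := hIord.out h0 hs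
    have hcont : ContinuousOn (fun y => r y ^ 2 - β * y ^ 2) (Icc 0 s) :=
      fun x hx => ((hhd0 x (hsub hx)).continuousAt).continuousWithinAt
    have hder : ∀ x ∈ Ico (0 : ℝ) s, HasDerivWithinAt (fun y => r y ^ 2 - β * y ^ 2) 0 (Ici x) x :=
      fun x hx => (hhd0 x (hsub ⟨hx.1, hx.2.le⟩)).hasDerivWithinAt
    have := constant_of_has_deriv_right_zero hcont hder s ⟨hpos.le, le_refl s⟩
    nlinarith [this]
end

section
/- Let γ₀ ∈ ℝ, let R(θ) denote the rotation matrix ((cos θ, −sin θ), (sin θ, cos θ)), and define v : ℝ → ℝ² by v(η) := R(γ₀η)·(sinh η, −γ₀ cosh η). Then for all η: ‖v'(η)‖² = (γ₀² + 1)(‖v(η)‖² + 1), v(η) × v'(η) = γ₀(‖v(η)‖² + 1) (where w × z := w₁z₂ − w₂z₁), and consequently the shape equation (γ₀² + 1)(v × v')² = γ₀²‖v'‖²(1 + ‖v‖²) holds. -/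
lemma aux_d0 (γ₀ η : ℝ) :
    HasDerivAt (fun t => Real.cos (γ₀ * t) * Real.sinh t + -Real.sin (γ₀ * t) * (-γ₀ * Real.cosh t))
      ((γ₀ ^ 2 + 1) * (Real.cos (γ₀ * η) * Real.cosh η)) η := by
  have h1 : HasDerivAt (fun t => Real.cos (γ₀ * t)) (-Real.sin (γ₀ * η) * γ₀) η :=
    (Real.hasDerivAt_cos (γ₀ * η)).comp η (by simpa using (hasDerivAt_id η).const_mul γ₀)
  have h2 : HasDerivAt (fun t => Real.sin (γ₀ * t)) (Real.cos (γ₀ * η) * γ₀) η :=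
    (Real.hasDerivAt_sin (γ₀ * η)).comp η (by simpa using (hasDerivAt_id η).const_mul γ₀)
  have := (h1.mul (Real.hasDerivAt_sinh η)).add
    ((h2.neg).mul ((Real.hasDerivAt_cosh η).const_mul (-γ₀)))
  refine this.congr_deriv ?_
  simp only [Pi.neg_apply]
  ring

lemma aux_d1 (γ₀ η : ℝ) :
    HasDerivAt (fun t => Real.sin (γ₀ * t) * Real.sinh t + Real.cos (γ₀ * t) * (-γ₀ * Real.cosh t))
      ((γ₀ ^ 2 + 1) * (Real.sin (γ₀ * η) * Real.cosh η)) η := by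
  have h1 : HasDerivAt (fun t => Real.cos (γ₀ * t)) (-Real.sin (γ₀ * η) * γ₀) η :=
    (Real.hasDerivAt_cos (γ₀ * η)).comp η (by simpa using (hasDerivAt_id η).const_mul γ₀)
  have h2 : HasDerivAt (fun t => Real.sin (γ₀ * t)) (Real.cos (γ₀ * η) * γ₀) η :=
    (Real.hasDerivAt_sin (γ₀ * η)).comp η (by simpa using (hasDerivAt_id η).const_mul γ₀)
  have := (h2.mul (Real.hasDerivAt_sinh η)).add
    (h1.mul ((Real.hasDerivAt_cosh η).const_mul (-γ₀)))
  refine this.congr_deriv ?_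
  ring

/-- The profile curve `v(η) = R(γ₀η)·(sinh η, −γ₀ cosh η)` satisfies
`‖v'‖² = (γ₀²+1)(‖v‖²+1)`, `v × v' = γ₀(‖v‖²+1)`, and hence the shape
equation `(γ₀²+1)(v × v')² = γ₀²‖v'‖²(1+‖v‖²)`. -/
theorem stmt_10 (γ₀ : ℝ)
    (v : ℝ → Fin 2 → ℝ)
    (hv : v = fun η =>
      Matrix.mulVec
        !![Real.cos (γ₀ * η), -Real.sin (γ₀ * η);
           Real.sin (γ₀ * η),  Real.cos (γ₀ * η)]
        ![Real.sinh η, -γ₀ * Real.cosh η])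
    (v' : ℝ → Fin 2 → ℝ)
    (hv' : v' = fun η i => deriv (fun t => v t i) η) :
    ∀ η : ℝ,
      v' η 0 ^ 2 + v' η 1 ^ 2 = (γ₀ ^ 2 + 1) * ((v η 0 ^ 2 + v η 1 ^ 2) + 1) ∧
      v η 0 * v' η 1 - v η 1 * v' η 0 = γ₀ * ((v η 0 ^ 2 + v η 1 ^ 2) + 1) ∧
      (γ₀ ^ 2 + 1) * (v η 0 * v' η 1 - v η 1 * v' η 0) ^ 2
        = γ₀ ^ 2 * (v' η 0 ^ 2 + v' η 1 ^ 2) * (1 + (v η 0 ^ 2 + v η 1 ^ 2)) := by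
  intro η
  have hv0 : ∀ t, v t 0 = Real.cos (γ₀ * t) * Real.sinh t + -Real.sin (γ₀ * t) * (-γ₀ * Real.cosh t) := by
    intro t
    simp [hv, Matrix.mulVec, dotProduct, Fin.sum_univ_two]; ring
  have hv1 : ∀ t, v t 1 = Real.sin (γ₀ * t) * Real.sinh t + Real.cos (γ₀ * t) * (-γ₀ * Real.cosh t) := by
    intro t
    simp [hv, Matrix.mulVec, dotProduct, Fin.sum_univ_two]; ring
  have hd0 : v' η 0 = (γ₀ ^ 2 + 1) * (Real.cos (γ₀ * η) * Real.cosh η) := by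
    rw [hv']
    simp only [hv0]
    exact (aux_d0 γ₀ η).deriv
  have hd1 : v' η 1 = (γ₀ ^ 2 + 1) * (Real.sin (γ₀ * η) * Real.cosh η) := by
    rw [hv']
    simp only [hv1]
    exact (aux_d1 γ₀ η).deriv
  have hpy : Real.sin (γ₀ * η) ^ 2 + Real.cos (γ₀ * η) ^ 2 = 1 := Real.sin_sq_add_cos_sq _
  have hch : Real.cosh η ^ 2 - Real.sinh η ^ 2 = 1 := Real.cosh_sq_sub_sinh_sq η
  have e1 : v' η 0 ^ 2 + v' η 1 ^ 2 = (γ₀ ^ 2 + 1) * ((v η 0 ^ 2 + v η 1 ^ 2) + 1) := by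
    rw [hv0 η, hv1 η, hd0, hd1]
    linear_combination ((γ₀ ^ 2 + 1) * (Real.cosh η ^ 2 - Real.sinh η ^ 2)) * hpy
      + (γ₀ ^ 2 + 1) * hch
  have e2 : v η 0 * v' η 1 - v η 1 * v' η 0 = γ₀ * ((v η 0 ^ 2 + v η 1 ^ 2) + 1) := by
    rw [hv0 η, hv1 η, hd0, hd1]
    linear_combination (γ₀ * (Real.cosh η ^ 2 - Real.sinh η ^ 2)) * hpy + γ₀ * hch
  refine ⟨e1, e2, ?_⟩
  rw [e1, e2]; ring
end

section
/- Let γ₀ > 0, ω > 0, set β := 1/(1 + γ₀²), μ := βω, κ₀ := γ₀ωβ, and r(s) := √(γ₀² + βω²s²)/ω. Then for all s ∈ ℝ: ω²·r(s)·√(1 − r'(s)²) = (1 + ω²r(s)²)·κ₀/√(1 + μ²s²). -/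
/-- The vanishing-mean-curvature identity `ω²r√(1 − r'²) = (1 + ω²r²)·κ` for
the arclength-parametrized profile curve, with curvature
`κ(s) = κ₀/√(1 + μ²s²)`, `κ₀ = γ₀ωβ`, `μ = βω`, `β = 1/(1+γ₀²)`. -/
theorem stmt_15 (γ₀ ω : ℝ) (hγ₀ : 0 < γ₀) (hω : 0 < ω)
    (β μ κ₀ : ℝ) (hβ : β = 1 / (1 + γ₀ ^ 2)) (hμ : μ = β * ω) (hκ₀ : κ₀ = γ₀ * ω * β)
    (r : ℝ → ℝ) (hr : r = fun s => Real.sqrt (γ₀ ^ 2 + β * ω ^ 2 * s ^ 2) / ω) :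
    ∀ s : ℝ,
      ω ^ 2 * r s * Real.sqrt (1 - deriv r s ^ 2)
        = (1 + ω ^ 2 * r s ^ 2) * κ₀ / Real.sqrt (1 + μ ^ 2 * s ^ 2) := by
  intro s
  have hβpos : 0 < β := by
    rw [hβ]; positivity
  have hβ1 : β * (1 + γ₀ ^ 2) = 1 := by
    rw [hβ]; field_simp
  have hApos : 0 < γ₀ ^ 2 + β * ω ^ 2 * s ^ 2 := by positivity
  set A : ℝ := γ₀ ^ 2 + β * ω ^ 2 * s ^ 2 with hAdef
  set a : ℝ := Real.sqrt A with ha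
  have hapos : 0 < a := Real.sqrt_pos.mpr hApos
  have ha2 : a ^ 2 = A := Real.sq_sqrt hApos.le
  have hBpos : 0 < 1 + μ ^ 2 * s ^ 2 := by positivity
  set b : ℝ := Real.sqrt (1 + μ ^ 2 * s ^ 2) with hb
  have hbpos : 0 < b := Real.sqrt_pos.mpr hBpos
  have hb2 : b ^ 2 = 1 + μ ^ 2 * s ^ 2 := Real.sq_sqrt hBpos.le
  -- compute the derivative
  have hderiv : deriv r s = β * ω * s / a := by
    have hf : HasDerivAt (fun t : ℝ => γ₀ ^ 2 + β * ω ^ 2 * t ^ 2)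
        (β * ω ^ 2 * (2 * s)) s := by
      have : HasDerivAt (fun t : ℝ => t ^ 2) (2 * s) s := by
        simpa using (hasDerivAt_pow 2 s)
      simpa using ((this.const_mul (β * ω ^ 2)).const_add (γ₀ ^ 2))
    have hsq : HasDerivAt (fun t : ℝ => Real.sqrt (γ₀ ^ 2 + β * ω ^ 2 * t ^ 2))
        (β * ω ^ 2 * (2 * s) / (2 * a)) s := hf.sqrt hApos.ne'
    have hdiv := hsq.div_const ω
    rw [hr]
    rw [hdiv.deriv]
    field_simp
  rw [hderiv, hr]
  simp only

  -- √(1 - r'²) = γ₀ * b / a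
  have hb2' : b ^ 2 = 1 + (β * ω) ^ 2 * s ^ 2 := by rw [hb2, hμ]
  have hkey : 1 - (β * ω * s / a) ^ 2 = (γ₀ * b / a) ^ 2 := by
    field_simp
    linear_combination ha2 - γ₀ ^ 2 * hb2' - β * ω ^ 2 * s ^ 2 * hβ1
  rw [hkey, Real.sqrt_sq (by positivity)]
  have h1A : (1 + A) * β = b ^ 2 := by
    rw [hb2, hμ, hAdef]; nlinarith [hβ1]
  rw [hκ₀]
  field_simp
  have hA' : γ₀ ^ 2 + ω ^ 2 * β * s ^ 2 = A := by rw [hAdef]; ring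
  rw [hA', ← ha]
  linear_combination (-a) * h1A + (-β * a) * ha2
end

section
/- Let γ₀ ≠ 0 and define w(ψ) := γ₀² cosh²ψ + sinh²ψ. Then for all ψ > 0: (γ₀/2)·(w'(ψ)/w(ψ))·√((w(ψ) + 1)/(w(ψ) − γ₀²)) = γ₀(1 + γ₀²)/(γ₀² + tanh²ψ), and the function ψ ↦ γ₀ψ − arctan(γ₀ coth ψ) is an antiderivative of ψ ↦ γ₀(1 + γ₀²)/(γ₀² + tanh²ψ) on (0, ∞). -/
/-- Evaluation of the integral for the polar angle via the substitution
`w = γ₀²cosh²ψ + sinh²ψ`: the integrand equals `γ₀(1+γ₀²)/(γ₀² + tanh²ψ)`,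
whose antiderivative on `(0,∞)` is `γ₀ψ − arctan(γ₀ coth ψ)`. -/
theorem stmt_18 (γ₀ : ℝ) (hγ₀ : γ₀ ≠ 0)
    (w : ℝ → ℝ) (hw : w = fun ψ => γ₀ ^ 2 * Real.cosh ψ ^ 2 + Real.sinh ψ ^ 2) :
    (∀ ψ : ℝ, 0 < ψ →
      γ₀ / 2 * (deriv w ψ / w ψ)
          * Real.sqrt ((w ψ + 1) / (w ψ - γ₀ ^ 2))
        = γ₀ * (1 + γ₀ ^ 2) / (γ₀ ^ 2 + Real.tanh ψ ^ 2)) ∧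
    ∀ ψ : ℝ, 0 < ψ →
      HasDerivAt (fun t => γ₀ * t - Real.arctan (γ₀ * (Real.cosh t / Real.sinh t)))
        (γ₀ * (1 + γ₀ ^ 2) / (γ₀ ^ 2 + Real.tanh ψ ^ 2)) ψ := by
  constructor
  · intro ψ hψ
    have hs : 0 < Real.sinh ψ := Real.sinh_pos_iff.mpr hψ
    have hc : 0 < Real.cosh ψ := Real.cosh_pos ψ
    have hid : Real.cosh ψ ^ 2 - Real.sinh ψ ^ 2 = 1 := Real.cosh_sq_sub_sinh_sq ψ
    have hwψ : w ψ = γ₀ ^ 2 * Real.cosh ψ ^ 2 + Real.sinh ψ ^ 2 := by rw [hw]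
    have hwpos : 0 < w ψ := by rw [hwψ]; positivity
    have hd : HasDerivAt w (2 * (1 + γ₀ ^ 2) * (Real.sinh ψ * Real.cosh ψ)) ψ := by
      subst hw
      have h1 := ((Real.hasDerivAt_cosh ψ).pow 2).const_mul (γ₀ ^ 2)
      have h2 := (Real.hasDerivAt_sinh ψ).pow 2
      refine (h1.add h2).congr_deriv (Eq.symm ?_)
      ring
    rw [hd.deriv]
    have hq : (w ψ + 1) / (w ψ - γ₀ ^ 2) = (Real.cosh ψ / Real.sinh ψ) ^ 2 := by
      rw [hwψ, div_pow]
      have h1 : γ₀ ^ 2 * Real.cosh ψ ^ 2 + Real.sinh ψ ^ 2 + 1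
          = (1 + γ₀ ^ 2) * Real.cosh ψ ^ 2 := by nlinarith [hid]
      have h2 : γ₀ ^ 2 * Real.cosh ψ ^ 2 + Real.sinh ψ ^ 2 - γ₀ ^ 2
          = (1 + γ₀ ^ 2) * Real.sinh ψ ^ 2 := by nlinarith [hid]
      rw [h1, h2, mul_div_mul_left _ _ (by positivity)]
    rw [hq, Real.sqrt_sq (by positivity)]
    rw [Real.tanh_eq_sinh_div_cosh, hwψ]
    have hden : γ₀ ^ 2 * Real.cosh ψ ^ 2 + Real.sinh ψ ^ 2 ≠ 0 := by positivity
    field_simp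
  · intro ψ hψ
    have hs : 0 < Real.sinh ψ := Real.sinh_pos_iff.mpr hψ
    have hc : 0 < Real.cosh ψ := Real.cosh_pos ψ
    have hid : Real.cosh ψ ^ 2 - Real.sinh ψ ^ 2 = 1 := Real.cosh_sq_sub_sinh_sq ψ
    have hcoth : HasDerivAt (fun t => Real.cosh t / Real.sinh t)
        (-(1 / Real.sinh ψ ^ 2)) ψ := by
      have := (Real.hasDerivAt_cosh ψ).div (Real.hasDerivAt_sinh ψ) hs.ne'
      refine this.congr_deriv (Eq.symm ?_)
      field_simp
      nlinarith [hid]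
    have harctan := (Real.hasDerivAt_arctan (γ₀ * (Real.cosh ψ / Real.sinh ψ))).comp ψ
      (hcoth.const_mul γ₀)
    have hfull := ((hasDerivAt_id ψ).const_mul γ₀).sub harctan
    refine hfull.congr_deriv (Eq.symm ?_)
    rw [Real.tanh_eq_sinh_div_cosh]
    have h1 : (1 : ℝ) + (γ₀ * (Real.cosh ψ / Real.sinh ψ)) ^ 2 ≠ 0 := by positivity
    have h2 : γ₀ ^ 2 + (Real.sinh ψ / Real.cosh ψ) ^ 2 ≠ 0 := by positivity
    field_simp
    linear_combination (γ₀ ^ 2 * Real.cosh ψ ^ 2 + Real.sinh ψ ^ 2) * hid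
end
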